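/- Let q = p^e and ξ ∈ F_q with Tr_{F_q}(ξ) ≠ 0. Define sequences in F_q by a_1 = ξ, c_1 = 1, d_1 = 0; a_2 = −1, c_2 = ξ, d_2 = −1; and for n ≥ 2: a_{n+1} = −a_n d_n, c_{n+1} = c_n²(ξ − (c_n^{−1}d_n)^p + c_n^{−1}d_n), d_{n+1} = −c_n². Then c_n ≠ 0 for every positive integer n. -/

import Mathlib

/-- The sequences `(a_n, c_n, d_n)` of equation (1.1): `a_1 = ξ, c_1 = 1, d_1 = 0`;
`a_2 = -1, c_2 = ξ, d_2 = -1`; and for `n ≥ 2`, `a_{n+1} = -a_n d_n`,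
`c_{n+1} = c_n²(ξ - (c_n⁻¹d_n)^p + c_n⁻¹d_n)`, `d_{n+1} = -c_n²`. -/
noncomputable def asSeq (p : ℕ) {K : Type*} [Field K] (ξ : K) : ℕ → K × K × K
  | 0 => (0, 0, 0)
  | 1 => (ξ, 1, 0)
  | 2 => (-1, ξ, -1)
  | n + 3 =>
    let s := asSeq p ξ (n + 2)
    (-s.1 * s.2.2, s.2.1 ^ 2 * (ξ - (s.2.1⁻¹ * s.2.2) ^ p + s.2.1⁻¹ * s.2.2), -s.2.1 ^ 2)

lemma trace_frob (p e : ℕ) [Fact p.Prime] (α : GaloisField p e) :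
    Algebra.trace (ZMod p) (GaloisField p e) (α ^ p) =
      Algebra.trace (ZMod p) (GaloisField p e) α := by
  let E : GaloisField p e ≃ₐ[ZMod p] GaloisField p e :=
    AlgEquiv.ofRingEquiv (f := frobeniusEquiv (GaloisField p e) p)
      (fun r => by rw [frobeniusEquiv_apply, frobenius_def, ← map_pow, ZMod.pow_card])
  have := Algebra.trace_eq_of_algEquiv E α
  simpa [E, AlgEquiv.ofRingEquiv, frobeniusEquiv_def, frobenius_def] using this

lemma asSeq_key (p e : ℕ) [Fact p.Prime] (ξ α : GaloisField p e)
    (hξ : Algebra.trace (ZMod p) (GaloisField p e) ξ ≠ 0) : ξ - α ^ p + α ≠ 0 := by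
  intro h
  have hα : ξ = α ^ p - α := by linear_combination h
  apply hξ
  rw [hα, map_sub, trace_frob, sub_self]

/-- For `q = p^e` and `ξ ∈ F_q` of nonzero absolute trace, the sequence `c_n`
defined by the recurrence (1.1) satisfies `c_n ≠ 0` for every positive integer `n`. -/
theorem asSeq_c_ne_zero (p e : ℕ) [Fact p.Prime] (he : 0 < e) (ξ : GaloisField p e)
    (hξ : Algebra.trace (ZMod p) (GaloisField p e) ξ ≠ 0) :
    ∀ n : ℕ, 1 ≤ n → (asSeq p ξ n).2.1 ≠ 0 := by
  have hξ0 : ξ ≠ 0 := by rintro rfl; exact hξ (map_zero _)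
  have main : ∀ n : ℕ, (asSeq p ξ (n + 1)).2.1 ≠ 0 := by
    intro n
    induction n with
    | zero => simp [asSeq]
    | succ m ih =>
      match m, ih with
      | 0, _ => simpa [asSeq] using hξ0
      | k + 1, ih =>
        show (asSeq p ξ (k + 3)).2.1 ≠ 0
        rw [asSeq]
        exact mul_ne_zero (pow_ne_zero 2 ih) (asSeq_key p e ξ _ hξ)
  intro n hn
  obtain ⟨m, rfl⟩ := Nat.exists_eq_add_of_le hn
  simpa [Nat.add_comm] using main m
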